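/- For an n×1×p tensor 𝒳, the 1×1×p tubular tensor 𝒳^H * 𝒳 is invertible (w.r.t. the T-product) if and only if all the vectors x̃_1,…,x̃_p appearing in the block diagonalization bcirc(𝒳) = (F_p ⊗ I_n) blockdiag(x̃_1,…,x̃_p) F_p^H are nonzero. -/

import Mathlib

open Matrix Complex Finset Kronecker
open scoped ComplexOrder

/-- The `p × p` circulant matrix with first column `v`. -/
noncomputable def circ (p : ℕ) (v : Fin p → ℂ) : Matrix (Fin p) (Fin p) ℂ :=
  Matrix.of fun j k => v (j - k)

/-- The normalized (unitary) DFT matrix of order `p`, with `ω = exp(-2πi/p)`. -/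
noncomputable def Fp (p : ℕ) : Matrix (Fin p) (Fin p) ℂ :=
  Matrix.of fun j k =>
    Complex.exp (-(2 * Real.pi * Complex.I * (j.val * k.val)) / p) / (Real.sqrt p : ℂ)

/-- Block circulant matrix of a third-order tensor given by its frontal slices. -/
noncomputable def bcirc {n m p : ℕ} (X : Fin p → Matrix (Fin n) (Fin m) ℂ) :
    Matrix (Fin p × Fin n) (Fin p × Fin m) ℂ :=
  Matrix.of fun jr kc => X (jr.1 - kc.1) jr.2 kc.2

/-- Block circulant matrix of an `n × 1 × p` tensor (slices viewed as vectors). -/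
noncomputable def bcircV {n p : ℕ} (X : Fin p → Fin n → ℂ) :
    Matrix (Fin p × Fin n) (Fin p) ℂ :=
  Matrix.of fun jr k => X (jr.1 - k) jr.2

/-- Block diagonal matrix (square-block index first). -/
noncomputable def blockDiagMat {n m p : ℕ} (D : Fin p → Matrix (Fin n) (Fin m) ℂ) :
    Matrix (Fin p × Fin n) (Fin p × Fin m) ℂ :=
  Matrix.of fun jr kc => if jr.1 = kc.1 then D jr.1 jr.2 kc.2 else 0

/-- Block diagonal matrix whose blocks are column vectors. -/
noncomputable def blockDiagVec {n p : ℕ} (x : Fin p → Fin n → ℂ) :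
    Matrix (Fin p × Fin n) (Fin p) ℂ :=
  Matrix.of fun jr k => if jr.1 = k then x k jr.2 else 0

/-- The T-product of two third-order tensors (slicewise cyclic convolution). -/
noncomputable def tmul {n m l p : ℕ} (A : Fin p → Matrix (Fin n) (Fin m) ℂ)
    (B : Fin p → Matrix (Fin m) (Fin l) ℂ) : Fin p → Matrix (Fin n) (Fin l) ℂ :=
  fun i => ∑ j, A (i - j) * B j

/-- The identity tensor: first frontal slice is `I_n`, the others are zero. -/
noncomputable def tId (n p : ℕ) [NeZero p] : Fin p → Matrix (Fin n) (Fin n) ℂ :=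
  fun i => if i = 0 then 1 else 0

/-- Conjugate T-transpose of a tensor. -/
noncomputable def tH {n m p : ℕ} (X : Fin p → Matrix (Fin n) (Fin m) ℂ) :
    Fin p → Matrix (Fin m) (Fin n) ℂ :=
  fun i => (X (-i))ᴴ

/-- The tubular tensor `𝒳ᴴ * 𝒴` for `n × 1 × p` tensors `𝒳, 𝒴`. -/
noncomputable def xHy {n p : ℕ} (X Y : Fin p → Fin n → ℂ) : Fin p → ℂ :=
  fun i => ∑ j, star (X (j - i)) ⬝ᵥ Y j

/-- The tubular tensor `𝒳ᴴ * 𝒳` for an `n × 1 × p` tensor `𝒳`. -/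
noncomputable def xHx {n p : ℕ} (X : Fin p → Fin n → ℂ) : Fin p → ℂ := xHy X X

/-- T-linear independence of a family of `n × 1 × p` tensors
(coefficients are tubular tensors acting via the T-product). -/
def TLinIndep {n p k : ℕ} (X : Fin k → Fin p → Fin n → ℂ) : Prop :=
  ∀ c : Fin k → Fin p → ℂ,
    (∀ i : Fin p, ∑ j, ∑ t, c j t • X j (i - t) = 0) → ∀ j, c j = 0

/-- `[λ]` is a tubular eigenvalue of the `n × n × p` tensor `𝒜`:
`𝒜 * 𝒳 = 𝒳 * [λ]` for some eigentensor `𝒳` with `𝒳ᴴ * 𝒳` invertible. -/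
def IsTubEig {n p : ℕ} (A : Fin p → Matrix (Fin n) (Fin n) ℂ) (lam : Fin p → ℂ) : Prop :=
  ∃ X : Fin p → Fin n → ℂ,
    (∀ i, ∑ t, (A (i - t)).mulVec (X t) = ∑ t, lam t • X (i - t)) ∧
    IsUnit (circ p (xHx X))

lemma root_sum_aux (p : ℕ) (hp : 0 < p) (d : ℤ) (hd : ¬ (p : ℤ) ∣ d) :
    ∑ m ∈ Finset.range p, Complex.exp (2 * Real.pi * Complex.I * d / p) ^ m = 0 := by
  set ζ : ℂ := Complex.exp (2 * Real.pi * Complex.I * d / p)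
  have hp' : (p : ℂ) ≠ 0 := by exact_mod_cast hp.ne'
  have hζp : ζ ^ p = 1 := by
    rw [← Complex.exp_nat_mul]
    have : (p : ℂ) * (2 * Real.pi * Complex.I * d / p) = d * (2 * Real.pi * Complex.I) := by
      field_simp
    rw [this, Complex.exp_int_mul_two_pi_mul_I]
  have hζ1 : ζ ≠ 1 := by
    intro hone
    rw [Complex.exp_eq_one_iff] at hone
    obtain ⟨k, hk⟩ := hone
    apply hd
    refine ⟨k, ?_⟩
    have h2 : (2 * Real.pi * Complex.I : ℂ) ≠ 0 := by
      simp [Real.pi_ne_zero, Complex.I_ne_zero]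
    have : (d : ℂ) = k * p := by
      field_simp at hk
      have hk2 : (2 * Real.pi * Complex.I) * d = (2 * Real.pi * Complex.I) * (k * p) := by
        linear_combination (2 * Real.pi * Complex.I) * hk
      exact mul_left_cancel₀ h2 hk2
    exact_mod_cast this.trans (mul_comm _ _)
  rw [geom_sum_eq hζ1, hζp]
  simp

lemma Fp_mul_conjT (p : ℕ) : (Fp p)ᴴ * Fp p = 1 := by
  ext j k
  have hp : 0 < p := j.pos
  have hp' : (p : ℂ) ≠ 0 := by exact_mod_cast hp.ne'
  have hsq : ((Real.sqrt p : ℂ)) * (Real.sqrt p : ℂ) = (p : ℂ) := by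
    rw [← Complex.ofReal_mul, Real.mul_self_sqrt (by positivity)]
    norm_cast
  set d : ℤ := (j.val : ℤ) - k.val with hd
  have hterm : ∀ m : Fin p,
      star (Fp p m j) * Fp p m k
        = Complex.exp (2 * Real.pi * Complex.I * d / p) ^ m.val / p := by
    intro m
    have h2 : (starRingEnd ℂ) 2 = 2 := by simp [Complex.ext_iff]
    simp only [Fp, Matrix.of_apply, star_div₀, Complex.star_def, ← Complex.exp_conj,
      map_div₀, map_neg, _root_.map_mul, Complex.conj_I, Complex.conj_ofReal, map_natCast,
      h2]
    rw [div_mul_div_comm, hsq, ← Complex.exp_nat_mul, ← Complex.exp_add]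
    congr 1
    have hdc : (d : ℂ) = (j.val : ℂ) - (k.val : ℂ) := by simp [hd]
    rw [hdc]
    field_simp
    ring
  rw [Matrix.mul_apply]
  simp only [Matrix.conjTranspose_apply, hterm]
  rw [← Finset.sum_div, Fin.sum_univ_eq_sum_range]
  by_cases hjk : j = k
  · subst hjk
    have hd0 : (d : ℂ) = 0 := by simp [hd]
    rw [Matrix.one_apply_eq, hd0]
    simp only [mul_zero, zero_div, Complex.exp_zero, one_pow, Finset.sum_const,
      Finset.card_range, nsmul_eq_mul, mul_one]
    field_simp
  · have hdvd : ¬ (p : ℤ) ∣ d := by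
      rintro ⟨c, hc⟩
      have hb1 : -(p:ℤ) < d := by omega
      have hb2 : d < p := by omega
      have hd0 : d ≠ 0 := by
        simp only [hd, sub_ne_zero]
        exact_mod_cast fun hh => hjk (Fin.ext hh)
      have hc0 : c ≠ 0 := by rintro rfl; simp at hc; exact hd0 hc
      have hp0 : (0:ℤ) < p := by exact_mod_cast hp
      rcases hc0.lt_or_gt with hlt | hlt
      · nlinarith
      · nlinarith
    rw [root_sum_aux p hp d hdvd, zero_div, Matrix.one_apply_ne hjk]

lemma circ_eq_aux {n p : ℕ} (X : Fin p → Fin n → ℂ) :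
    circ p (xHx X) = (bcircV X)ᴴ * bcircV X := by
  ext j k
  haveI : NeZero p := ⟨j.pos.ne'⟩
  rw [Matrix.mul_apply, Fintype.sum_prod_type]
  simp only [circ, xHx, xHy, Matrix.of_apply, Matrix.conjTranspose_apply, bcircV,
    dotProduct, Pi.star_apply]
  refine Fintype.sum_equiv (Equiv.addRight k) _ _ fun m => ?_
  simp only [Equiv.coe_addRight]
  rw [sub_sub_eq_add_sub, add_sub_cancel_right]

lemma kronH_aux {n p : ℕ} : ((Fp p) ⊗ₖ (1 : Matrix (Fin n) (Fin n) ℂ))ᴴ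
    = (Fp p)ᴴ ⊗ₖ (1 : Matrix (Fin n) (Fin n) ℂ) := by
  ext jr kc
  simp only [Matrix.conjTranspose_apply, Matrix.kroneckerMap_apply, star_mul',
    Matrix.one_apply, apply_ite, star_one, star_zero]
  by_cases hh : jr.2 = kc.2
  · simp [hh, mul_comm]
  · simp [hh, (Ne.symm hh : ¬ kc.2 = jr.2)]

lemma diagD_aux {n p : ℕ} (xt : Fin p → Fin n → ℂ) :
    (blockDiagVec xt)ᴴ * blockDiagVec xt
      = Matrix.diagonal (fun i => star (xt i) ⬝ᵥ xt i) := by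
  ext j k
  rw [Matrix.mul_apply, Fintype.sum_prod_type]
  simp only [Matrix.conjTranspose_apply, blockDiagVec, Matrix.of_apply, Matrix.diagonal,
    dotProduct, Pi.star_apply, apply_ite, star_zero, ite_mul, mul_ite, zero_mul, mul_zero]
  by_cases hjk : j = k
  · subst hjk
    simp
  · simp [hjk, Finset.sum_ite_eq, Ne.symm hjk]

/-- `𝒳ᴴ * 𝒳` is invertible iff all Fourier-block vectors of `𝒳` are nonzero. -/
theorem xHx_invertible_iff_blocks_ne_zero (n p : ℕ) (X xt : Fin p → Fin n → ℂ)
    (h : bcircV X = (Fp p ⊗ₖ (1 : Matrix (Fin n) (Fin n) ℂ)) * blockDiagVec xt * (Fp p)ᴴ) :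
    IsUnit (circ p (xHx X)) ↔ ∀ i, xt i ≠ 0 := by
  rw [circ_eq_aux, h]
  have hFH : (Fp p)ᴴ * Fp p = 1 := Fp_mul_conjT p
  have hFFH : Fp p * (Fp p)ᴴ = 1 := mul_eq_one_comm.mp hFH
  have hKK : ((Fp p ⊗ₖ (1 : Matrix (Fin n) (Fin n) ℂ))ᴴ) *
      (Fp p ⊗ₖ (1 : Matrix (Fin n) (Fin n) ℂ)) = 1 := by
    rw [kronH_aux, ← Matrix.mul_kronecker_mul, hFH, Matrix.one_mul,
      Matrix.one_kronecker_one]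
  have hM : (Fp p ⊗ₖ (1 : Matrix (Fin n) (Fin n) ℂ) * blockDiagVec xt * (Fp p)ᴴ)ᴴ *
      (Fp p ⊗ₖ (1 : Matrix (Fin n) (Fin n) ℂ) * blockDiagVec xt * (Fp p)ᴴ)
      = Fp p * Matrix.diagonal (fun i => star (xt i) ⬝ᵥ xt i) * (Fp p)ᴴ := by
    rw [Matrix.conjTranspose_mul, Matrix.conjTranspose_mul,
      Matrix.conjTranspose_conjTranspose, ← diagD_aux]
    simp only [Matrix.mul_assoc]
    conv_lhs => rw [← Matrix.mul_assoc ((Fp p ⊗ₖ (1 : Matrix (Fin n) (Fin n) ℂ))ᴴ)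
      (Fp p ⊗ₖ (1 : Matrix (Fin n) (Fin n) ℂ)), hKK, Matrix.one_mul]
  rw [hM, Matrix.isUnit_iff_isUnit_det, Matrix.det_mul, Matrix.det_mul,
    Matrix.det_diagonal]
  have hdet : (Fp p).det * ((Fp p)ᴴ).det = 1 := by
    rw [← Matrix.det_mul, hFFH, Matrix.det_one]
  have hF0 : (Fp p).det ≠ 0 := left_ne_zero_of_mul_eq_one hdet
  have hFH0 : ((Fp p)ᴴ).det ≠ 0 := right_ne_zero_of_mul_eq_one hdet
  rw [isUnit_iff_ne_zero, mul_ne_zero_iff, mul_ne_zero_iff]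
  simp only [hF0, hFH0, true_and, and_true, Finset.prod_ne_zero_iff, Finset.mem_univ,
    true_imp_iff]
  rw [and_iff_left hFH0, and_iff_right hF0]
  refine forall_congr' fun i => ?_
  rw [Ne, dotProduct_star_self_eq_zero]
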